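/- Let G_n denote the number of structures on an n-element set obtained by partitioning the set into nonempty blocks and equipping each block with a hierarchical ordering (G_0 = 1). Then the exponential generating function ∑_{n≥0} (G_n/n!) x^n equals exp( exp( 1/(2 − e^x) − 1 ) − 1 ) as a formal power series over ℚ; equivalently, ∑_{n≥0} (G_n/n!) x^n = exp( ∑_{n≥1} (H_n/n!) x^n ). -/

import Mathlib

open Finset PowerSeries Filter Nat

/-- `L` is an ordered set partition of the finite set `S`: a finite sequence of pairwise
disjoint nonempty subsets of `S` whose union is `S`. -/
def IsOrderedSetPartition {α : Type*} [DecidableEq α] (S : Finset α) (L : List (Finset α)) :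
    Prop :=
  (∀ T ∈ L, T ≠ ∅) ∧ L.Pairwise Disjoint ∧ L.foldr (· ∪ ·) ∅ = S

/-- The type of ordered set partitions of the finite set `S`. -/
def OrderedSetPartition {α : Type*} [DecidableEq α] (S : Finset α) :=
  {L : List (Finset α) // IsOrderedSetPartition S L}

/-- The ordered Bell number `B n`: the number of ordered set partitions of an `n`-element set. -/
noncomputable def orderedBell (n : ℕ) : ℕ :=
  Nat.card (OrderedSetPartition (Finset.univ : Finset (Fin n)))

/-- A hierarchical ordering (society) on the finite set `S`: an (unordered) set partition of `S`
into nonempty blocks, together with an ordered set partition of each block. -/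
def HierarchicalOrdering {α : Type*} [DecidableEq α] (S : Finset α) :=
  (P : Finpartition S) × ((b : P.parts) → OrderedSetPartition (b : Finset α))

/-- `H n`: the number of hierarchical orderings on an `n`-element set. -/
noncomputable def hier (n : ℕ) : ℕ :=
  Nat.card (HierarchicalOrdering (Finset.univ : Finset (Fin n)))

/-- The formal exponential `exp S` of a power series (intended for `S` with zero constant
term): its `n`-th coefficient is `∑_{k=0}^{n} [xⁿ] Sᵏ / k!`. -/
noncomputable def expComp (S : PowerSeries ℚ) : PowerSeries ℚ :=
  PowerSeries.mk fun n => ∑ k ∈ Finset.range (n + 1), PowerSeries.coeff (R := ℚ) n (S ^ k) / (k ! : ℚ)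


/-- `G n`: the number of structures on an `n`-element set obtained by partitioning the set
into nonempty blocks and equipping each block with a hierarchical ordering
("hierarchies of hierarchical orderings"). -/
noncomputable def hierHier (n : ℕ) : ℕ :=
  Nat.card ((P : Finpartition (Finset.univ : Finset (Fin n))) ×
    ((b : P.parts) → HierarchicalOrdering (b : Finset (Fin n))))


namespace EgfAux


variable {α β : Type*} [DecidableEq α] [DecidableEq β]

/-- transport of a finset along an equivalence of coercions -/
def tmap {S : Finset α} {S' : Finset β} (σ : {x // x ∈ S} ≃ {y // y ∈ S'})
    (T : Finset α) : Finset β :=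
  (S.attach.filter (fun x => x.1 ∈ T)).image (fun x => (σ x : β))

lemma mem_tmap {S : Finset α} {S' : Finset β} (σ : {x // x ∈ S} ≃ {y // y ∈ S'})
    {T : Finset α} {y : β} :
    y ∈ tmap σ T ↔ ∃ h : y ∈ S', ((σ.symm ⟨y, h⟩ : {x // x ∈ S}) : α) ∈ T := by
  constructor
  · rintro hy
    rw [tmap, Finset.mem_image] at hy
    obtain ⟨x, hx, rfl⟩ := hy
    rw [Finset.mem_filter] at hx
    exact ⟨(σ x).2, by rw [Equiv.symm_apply_apply]; exact hx.2⟩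
  · rintro ⟨h, hx⟩
    rw [tmap, Finset.mem_image]
    exact ⟨σ.symm ⟨y, h⟩, Finset.mem_filter.mpr ⟨Finset.mem_attach _ _, hx⟩,
      by rw [Equiv.apply_symm_apply]⟩

lemma tmap_subset {S : Finset α} {S' : Finset β} (σ : {x // x ∈ S} ≃ {y // y ∈ S'})
    (T : Finset α) : tmap σ T ⊆ S' := fun y hy => (mem_tmap σ |>.mp hy).1

lemma tmap_union {S : Finset α} {S' : Finset β} (σ : {x // x ∈ S} ≃ {y // y ∈ S'})
    (A B : Finset α) : tmap σ (A ∪ B) = tmap σ A ∪ tmap σ B := by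
  ext y
  simp only [mem_tmap, Finset.mem_union, exists_or]

lemma tmap_empty {S : Finset α} {S' : Finset β} (σ : {x // x ∈ S} ≃ {y // y ∈ S'}) :
    tmap σ (∅ : Finset α) = ∅ := by
  ext y; simp [mem_tmap]

lemma tmap_self {S : Finset α} {S' : Finset β} (σ : {x // x ∈ S} ≃ {y // y ∈ S'}) :
    tmap σ S = S' := by
  ext y
  simp only [mem_tmap]
  exact ⟨fun ⟨h, _⟩ => h, fun h => ⟨h, (σ.symm ⟨y, h⟩).2⟩⟩

lemma tmap_tmap {S : Finset α} {S' : Finset β} (σ : {x // x ∈ S} ≃ {y // y ∈ S'})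
    {T : Finset α} (hT : T ⊆ S) : tmap σ.symm (tmap σ T) = T := by
  ext x
  simp only [mem_tmap, Equiv.symm_symm]
  constructor
  · rintro ⟨h, h2, h3⟩
    have : (σ.symm ⟨(σ ⟨x, h⟩ : β), h2⟩) = ⟨x, h⟩ := by
      rw [show (⟨(σ ⟨x, h⟩ : β), h2⟩ : {y // y ∈ S'}) = σ ⟨x, h⟩ from rfl,
        Equiv.symm_apply_apply]
    rwa [this] at h3
  · intro hx
    have h : x ∈ S := hT hx
    refine ⟨h, (σ ⟨x, h⟩).2, ?_⟩
    have : (σ.symm ⟨(σ ⟨x, h⟩ : β), (σ ⟨x, h⟩).2⟩) = ⟨x, h⟩ := by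
      rw [show (⟨(σ ⟨x, h⟩ : β), (σ ⟨x, h⟩).2⟩ : {y // y ∈ S'}) = σ ⟨x, h⟩ from rfl,
        Equiv.symm_apply_apply]
    rw [this]
    exact hx

lemma tmap_disjoint {S : Finset α} {S' : Finset β} (σ : {x // x ∈ S} ≃ {y // y ∈ S'})
    {A B : Finset α} (h : Disjoint A B) : Disjoint (tmap σ A) (tmap σ B) := by
  rw [Finset.disjoint_left]
  intro y hA hB
  obtain ⟨h1, h2⟩ := (mem_tmap σ).mp hA
  obtain ⟨h1', h2'⟩ := (mem_tmap σ).mp hB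
  exact (Finset.disjoint_left.mp h) h2 h2'

lemma tmap_nonempty {S : Finset α} {S' : Finset β} (σ : {x // x ∈ S} ≃ {y // y ∈ S'})
    {T : Finset α} (hT : T ⊆ S) (h : T ≠ ∅) : tmap σ T ≠ ∅ := by
  obtain ⟨x, hx⟩ := Finset.nonempty_iff_ne_empty.mpr h
  have hxS : x ∈ S := hT hx
  refine Finset.nonempty_iff_ne_empty.mp ⟨(σ ⟨x, hxS⟩ : β), ?_⟩
  refine (mem_tmap σ).mpr ⟨(σ ⟨x, hxS⟩).2, ?_⟩
  have : (σ.symm ⟨(σ ⟨x, hxS⟩ : β), (σ ⟨x, hxS⟩).2⟩) = ⟨x, hxS⟩ := by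
    rw [show (⟨(σ ⟨x, hxS⟩ : β), (σ ⟨x, hxS⟩).2⟩ : {y // y ∈ S'}) = σ ⟨x, hxS⟩ from rfl,
      Equiv.symm_apply_apply]
  rw [this]
  exact hx

lemma tmap_card {S : Finset α} {S' : Finset β} (σ : {x // x ∈ S} ≃ {y // y ∈ S'})
    {T : Finset α} (hT : T ⊆ S) : (tmap σ T).card = T.card := by
  rw [tmap, Finset.card_image_of_injective _ (fun a b hab => by
    exact Subtype.ext_iff.mpr (by exact Subtype.ext_iff.mp (σ.injective (Subtype.ext hab))))]
  rw [← Finset.card_image_of_injective (S.attach.filter fun x => x.1 ∈ T)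
    Subtype.val_injective]
  congr 1
  ext x
  simp only [Finset.mem_image, Finset.mem_filter, Finset.mem_attach, true_and]
  constructor
  · rintro ⟨⟨x', hx'⟩, h2, rfl⟩; exact h2
  · intro hx; exact ⟨⟨x, hT hx⟩, hx, rfl⟩


lemma coe_symm_apply {S : Finset α} {S' : Finset β} (σ : {x // x ∈ S} ≃ {y // y ∈ S'})
    (z : {x // x ∈ S}) (h : ((σ z : β)) ∈ S') : σ.symm ⟨(σ z : β), h⟩ = z := by
  rw [show (⟨(σ z : β), h⟩ : {y // y ∈ S'}) = σ z from rfl, Equiv.symm_apply_apply]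

lemma subset_foldr (L : List (Finset α)) {T : Finset α} (hT : T ∈ L) :
    T ⊆ L.foldr (· ∪ ·) ∅ := by
  induction L with
  | nil => simp at hT
  | cons A L ih =>
    rcases List.mem_cons.mp hT with rfl | h
    · exact Finset.subset_union_left
    · exact (ih h).trans Finset.subset_union_right

lemma mem_osp_subset {S : Finset α} {L : List (Finset α)}
    (hL : IsOrderedSetPartition S L) {T : Finset α} (hT : T ∈ L) : T ⊆ S := by
  rw [← hL.2.2]; exact subset_foldr L hT

lemma foldr_map_tmap {S : Finset α} {S' : Finset β} (σ : {x // x ∈ S} ≃ {y // y ∈ S'})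
    (L : List (Finset α)) :
    (L.map (tmap σ)).foldr (· ∪ ·) ∅ = tmap σ (L.foldr (· ∪ ·) ∅) := by
  induction L with
  | nil => simp [tmap_empty]
  | cons A L ih => simp [ih, tmap_union]

def ospMap {S : Finset α} {S' : Finset β} (σ : {x // x ∈ S} ≃ {y // y ∈ S'})
    (L : OrderedSetPartition S) : OrderedSetPartition S' :=
  ⟨L.1.map (tmap σ), by
    obtain ⟨L, h1, h2, h3⟩ := L
    refine ⟨?_, ?_, ?_⟩
    · intro T hT
      rw [List.mem_map] at hT
      obtain ⟨T₀, hT₀, rfl⟩ := hT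
      exact tmap_nonempty σ (mem_osp_subset ⟨h1, h2, h3⟩ hT₀) (h1 T₀ hT₀)
    · exact h2.map _ (fun A B hAB => tmap_disjoint σ hAB)
    · rw [foldr_map_tmap, h3, tmap_self]⟩

def ospEquiv {S : Finset α} {S' : Finset β} (σ : {x // x ∈ S} ≃ {y // y ∈ S'}) :
    OrderedSetPartition S ≃ OrderedSetPartition S' where
  toFun := ospMap σ
  invFun := ospMap σ.symm
  left_inv L := by
    refine Subtype.ext ?_
    show (L.1.map (tmap σ)).map (tmap σ.symm) = L.1
    rw [List.map_map]
    conv_rhs => rw [← List.map_id L.1]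
    exact List.map_congr_left fun T hT => tmap_tmap σ (mem_osp_subset L.2 hT)
  right_inv L := by
    refine Subtype.ext ?_
    show (L.1.map (tmap σ.symm)).map (tmap σ) = L.1
    rw [List.map_map]
    conv_rhs => rw [← List.map_id L.1]
    refine List.map_congr_left fun T hT => ?_
    have := tmap_tmap σ.symm (mem_osp_subset L.2 hT)
    rwa [Equiv.symm_symm] at this

lemma sup_tmap {S : Finset α} {S' : Finset β} (σ : {x // x ∈ S} ≃ {y // y ∈ S'})
    (t : Finset (Finset α)) : t.sup (tmap σ) = tmap σ (t.sup id) := by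
  induction t using Finset.induction_on with
  | empty => simp [tmap_empty]
  | insert _ _ h ih =>
    rw [Finset.sup_insert, Finset.sup_insert, ih, id]
    rw [show ∀ A B : Finset β, A ⊔ B = A ∪ B from fun _ _ => rfl, ← tmap_union]
    rfl

def fpMap {S : Finset α} {S' : Finset β} (σ : {x // x ∈ S} ≃ {y // y ∈ S'})
    (P : Finpartition S) : Finpartition S' where
  parts := P.parts.image (tmap σ)
  supIndep := by
    rw [Finset.supIndep_iff_pairwiseDisjoint]
    rintro b hb c hc hbc
    rw [Finset.coe_image, Set.mem_image] at hb hc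
    obtain ⟨b₀, hb₀, rfl⟩ := hb
    obtain ⟨c₀, hc₀, rfl⟩ := hc
    have hne : b₀ ≠ c₀ := fun h => hbc (by rw [h])
    exact tmap_disjoint σ (P.disjoint hb₀ hc₀ hne)
  sup_parts := by
    rw [Finset.sup_image, show ((id : Finset β → Finset β) ∘ tmap σ) = tmap σ from rfl,
      sup_tmap, P.sup_parts, tmap_self]
  bot_notMem := by
    intro h
    rw [Finset.mem_image] at h
    obtain ⟨b₀, hb₀, hb⟩ := h
    exact tmap_nonempty σ (P.le hb₀) (P.ne_bot hb₀) hb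

def fpEquiv {S : Finset α} {S' : Finset β} (σ : {x // x ∈ S} ≃ {y // y ∈ S'}) :
    Finpartition S ≃ Finpartition S' where
  toFun := fpMap σ
  invFun := fpMap σ.symm
  left_inv P := by
    refine Finpartition.ext ?_
    show (P.parts.image (tmap σ)).image (tmap σ.symm) = P.parts
    rw [Finset.image_image]
    conv_rhs => rw [← Finset.image_id (s := P.parts)]
    exact Finset.image_congr fun T hT => tmap_tmap σ (P.le hT)
  right_inv P := by
    refine Finpartition.ext ?_
    show (P.parts.image (tmap σ.symm)).image (tmap σ) = P.parts
    rw [Finset.image_image]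
    conv_rhs => rw [← Finset.image_id (s := P.parts)]
    refine Finset.image_congr fun T hT => ?_
    have := tmap_tmap σ.symm (P.le hT)
    rwa [Equiv.symm_symm] at this

def partsEquiv {S : Finset α} {S' : Finset β} (σ : {x // x ∈ S} ≃ {y // y ∈ S'})
    (P : Finpartition S) : {b // b ∈ P.parts} ≃ {b' // b' ∈ (fpMap σ P).parts} where
  toFun b := ⟨tmap σ b.1, Finset.mem_image_of_mem _ b.2⟩
  invFun b' := ⟨tmap σ.symm b'.1, by
    obtain ⟨b₀, hb₀, hb⟩ := Finset.mem_image.mp b'.2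
    rw [← hb, tmap_tmap σ (P.le hb₀)]
    exact hb₀⟩
  left_inv b := Subtype.ext (tmap_tmap σ (P.le b.2))
  right_inv b' := by
    refine Subtype.ext ?_
    obtain ⟨b₀, hb₀, hb⟩ := Finset.mem_image.mp b'.2
    show tmap σ (tmap σ.symm b'.1) = b'.1
    rw [← hb, tmap_tmap σ (P.le hb₀)]

def σres {S : Finset α} {S' : Finset β} (σ : {x // x ∈ S} ≃ {y // y ∈ S'})
    (b : Finset α) (hb : b ⊆ S) : {x // x ∈ b} ≃ {y // y ∈ tmap σ b} where
  toFun x := ⟨(σ ⟨x.1, hb x.2⟩ : β), (mem_tmap σ).mpr ⟨(σ ⟨x.1, hb x.2⟩).2, by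
    rw [coe_symm_apply]; exact x.2⟩⟩
  invFun y := ⟨(σ.symm ⟨y.1, tmap_subset σ b y.2⟩ : α), by
    obtain ⟨h, hx⟩ := (mem_tmap σ).mp y.2
    exact hx⟩
  left_inv x := by
    refine Subtype.ext ?_
    show (σ.symm ⟨(σ ⟨x.1, hb x.2⟩ : β), _⟩ : α) = x.1
    rw [coe_symm_apply]
  right_inv y := by
    refine Subtype.ext ?_
    show (σ (⟨(σ.symm ⟨y.1, tmap_subset σ b y.2⟩ : α), _⟩ : {x // x ∈ S}) : β) = y.1
    rw [show (⟨(σ.symm ⟨y.1, tmap_subset σ b y.2⟩ : α), _⟩ : {x // x ∈ S})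
      = σ.symm ⟨y.1, tmap_subset σ b y.2⟩ from rfl, Equiv.apply_symm_apply]

def wrapEquiv {S : Finset α} {S' : Finset β} (σ : {x // x ∈ S} ≃ {y // y ∈ S'})
    (St₁ : Finset α → Type*) (St₂ : Finset β → Type*)
    (h : ∀ (b : Finset α), b ⊆ S → St₁ b ≃ St₂ (tmap σ b)) :
    ((P : Finpartition S) × ((b : P.parts) → St₁ b)) ≃
      ((P : Finpartition S') × ((b : P.parts) → St₂ b)) :=
  Equiv.sigmaCongr (fpEquiv σ) (fun P => Equiv.piCongr (partsEquiv σ P)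
    (fun b => h b.1 (P.le b.2)))

def hierEquiv {S : Finset α} {S' : Finset β} (σ : {x // x ∈ S} ≃ {y // y ∈ S'}) :
    HierarchicalOrdering S ≃ HierarchicalOrdering S' :=
  wrapEquiv σ _ _ (fun b hb => ospEquiv (σres σ b hb))

def wrapHierEquiv {S : Finset α} {S' : Finset β} (σ : {x // x ∈ S} ≃ {y // y ∈ S'}) :
    ((P : Finpartition S) × ((b : P.parts) → HierarchicalOrdering (b : Finset α))) ≃
      ((P : Finpartition S') × ((b : P.parts) → HierarchicalOrdering (b : Finset β))) :=
  wrapEquiv σ _ _ (fun b hb => hierEquiv (σres σ b hb))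

noncomputable def toFinEquiv (S : Finset α) :
    {x // x ∈ S} ≃ {y // y ∈ (Finset.univ : Finset (Fin S.card))} :=
  S.equivFin.trans (Equiv.subtypeUnivEquiv (fun y => Finset.mem_univ y)).symm

lemma card_osp (S : Finset α) : Nat.card (OrderedSetPartition S) = orderedBell S.card :=
  Nat.card_congr (ospEquiv (toFinEquiv S))

lemma card_hier (S : Finset α) : Nat.card (HierarchicalOrdering S) = hier S.card :=
  Nat.card_congr (hierEquiv (toFinEquiv S))

lemma card_wrapHier (S : Finset α) :
    Nat.card ((P : Finpartition S) × ((b : P.parts) → HierarchicalOrdering (b : Finset α)))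
      = hierHier S.card :=
  Nat.card_congr (wrapHierEquiv (toFinEquiv S))


section Finiteness

variable {γ : Type*} [DecidableEq γ] [Fintype γ]

lemma osp_nodup {S : Finset γ} (L : OrderedSetPartition S) : L.1.Nodup := by
  obtain ⟨L, h1, h2, h3⟩ := L
  rw [List.Nodup]
  refine h2.imp_of_mem ?_
  intro a b ha hb hab
  intro h
  subst h
  exact h1 a ha (by simpa using disjoint_self.mp hab)

instance osp_finite (S : Finset γ) : Finite (OrderedSetPartition S) := by
  have : Fintype {l : List (Finset γ) // l.Nodup} := fintypeNodupList
  refine Finite.of_injective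
    (fun L : OrderedSetPartition S => (⟨L.1, osp_nodup L⟩ : {l : List (Finset γ) // l.Nodup}))
    ?_
  intro L L' h
  apply Subtype.ext
  have h2 : (⟨L.1, osp_nodup L⟩ : {l : List (Finset γ) // l.Nodup}).val
      = (⟨L'.1, osp_nodup L'⟩ : {l : List (Finset γ) // l.Nodup}).val := congrArg Subtype.val h
  exact h2

instance hier_finite (S : Finset γ) : Finite (HierarchicalOrdering S) := by
  unfold HierarchicalOrdering
  infer_instance

end Finiteness

section Counting

variable {γ : Type*} [DecidableEq γ] [Fintype γ]

lemma nat_card_sigma_pi (S : Finset γ) (St : Finset γ → Type*) [∀ b, Finite (St b)] :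
    Nat.card ((P : Finpartition S) × ((b : P.parts) → St (b : Finset γ)))
      = ∑ P : Finpartition S, ∏ b ∈ P.parts.attach, Nat.card (St (b : Finset γ)) := by
  classical
  have : ∀ b : Finset γ, Fintype (St b) := fun b => Fintype.ofFinite _
  rw [Nat.card_eq_fintype_card, Fintype.card_sigma]
  refine Finset.sum_congr rfl fun P _ => ?_
  rw [Fintype.card_pi]
  rw [show (Finset.univ : Finset {x // x ∈ P.parts}) = P.parts.attach from Finset.univ_eq_attach _]
  exact Finset.prod_congr rfl fun b _ => (Nat.card_eq_fintype_card).symm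

end Counting


section Split

variable {γ : Type*} [DecidableEq γ]

lemma avoid_parts_of_mem {S : Finset γ} (P : Finpartition S) {T : Finset γ}
    (hT : T ∈ P.parts) : (P.avoid T).parts = P.parts.erase T := by
  ext c
  rw [Finpartition.mem_avoid, Finset.mem_erase]
  constructor
  · rintro ⟨d, hd, hdT, rfl⟩
    have hne : d ≠ T := fun h => hdT (le_of_eq h)
    have hdis : Disjoint d T := P.disjoint hd hT hne
    rw [Finset.sdiff_eq_self_iff_disjoint.mpr hdis]
    exact ⟨hne, hd⟩
  · rintro ⟨hcT, hc⟩
    have hdis : Disjoint c T := P.disjoint hc hT hcT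
    refine ⟨c, hc, fun hle => P.ne_bot hc (le_bot_iff.mp (hdis le_rfl hle)), ?_⟩
    exact Finset.sdiff_eq_self_iff_disjoint.mpr hdis


def splitEquiv {S : Finset γ} {a : γ} (ha : a ∈ S) :
    Finpartition S ≃ (Σ T : {T : Finset γ // a ∈ T ∧ T ⊆ S}, Finpartition (S \ T.1)) where
  toFun P := ⟨⟨P.part a, P.mem_part ha, P.le (P.part_mem.mpr ha)⟩, P.avoid (P.part a)⟩
  invFun x :=
    x.2.extend (by
        rw [Finset.bot_eq_empty]
        exact Finset.ne_empty_of_mem x.1.2.1)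
      Finset.sdiff_disjoint
      (by
        rw [show (S \ x.1.1) ⊔ x.1.1 = (S \ x.1.1) ∪ x.1.1 from rfl,
          Finset.sdiff_union_of_subset x.1.2.2])
  left_inv P := by
    refine Finpartition.ext ?_
    rw [Finpartition.extend_parts, avoid_parts_of_mem P (P.part_mem.mpr ha),
      Finset.insert_erase (P.part_mem.mpr ha)]
  right_inv := by
    rintro ⟨⟨T, haT, hTS⟩, Q⟩
    have hTQ : T ∉ Q.parts := by
      intro h
      have : T ⊆ S \ T := Q.le h
      have := this haT
      rw [Finset.mem_sdiff] at this
      exact this.2 haT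
    have hmem : T ∈ (Q.extend (by rw [Finset.bot_eq_empty]; exact Finset.ne_empty_of_mem haT)
        Finset.sdiff_disjoint (by rw [show (S \ T) ⊔ T = (S \ T) ∪ T from rfl,
          Finset.sdiff_union_of_subset hTS])).parts := by
      rw [Finpartition.extend_parts]
      exact Finset.mem_insert_self _ _
    have h1 : (Q.extend (by rw [Finset.bot_eq_empty]; exact Finset.ne_empty_of_mem haT)
        Finset.sdiff_disjoint (by rw [show (S \ T) ⊔ T = (S \ T) ∪ T from rfl,
          Finset.sdiff_union_of_subset hTS])).part a = T :=
      Finpartition.part_eq_of_mem _ hmem haT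
    have h2 : (Q.extend (by rw [Finset.bot_eq_empty]; exact Finset.ne_empty_of_mem haT)
        Finset.sdiff_disjoint (by rw [show (S \ T) ⊔ T = (S \ T) ∪ T from rfl,
          Finset.sdiff_union_of_subset hTS])).avoid T = Q := by
      refine Finpartition.ext ?_
      rw [avoid_parts_of_mem _ hmem, Finpartition.extend_parts, Finset.erase_insert hTQ]
    refine Sigma.ext (Subtype.ext h1) ?_
    show HEq ((Q.extend _ _ _).avoid ((Q.extend _ _ _).part a)) Q
    rw [h1]
    exact heq_of_eq h2

end Split


lemma not_mem_parts_sdiff {γ : Type*} [DecidableEq γ] {S T : Finset γ} {a : γ} (haT : a ∈ T)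
    (Q : Finpartition (S \ T)) : T ∉ Q.parts := by
  intro h
  have h2 := Q.le h haT
  rw [Finset.mem_sdiff] at h2
  exact h2.2 haT

lemma wrap_rec (n : ℕ) (St : Finset (Fin (n+1)) → Type*) [∀ b, Finite (St b)] (c w : ℕ → ℕ)
    (hc : ∀ b : Finset (Fin (n+1)), Nat.card (St b) = c b.card)
    (hw : ∀ S : Finset (Fin (n+1)),
      Nat.card ((P : Finpartition S) × ((b : P.parts) → St (b : Finset (Fin (n+1))))) = w S.card) :
    w (n+1) = ∑ j ∈ Finset.range (n+1), n.choose j * (c (j+1) * w (n-j)) := by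
  classical
  have key : ∀ S : Finset (Fin (n+1)),
      w S.card = ∑ P : Finpartition S, ∏ b ∈ P.parts, c b.card := by
    intro S
    rw [← hw S, nat_card_sigma_pi]
    refine Finset.sum_congr rfl fun P _ => ?_
    rw [← Finset.prod_attach P.parts (fun b => c b.card)]
    exact Finset.prod_congr rfl fun b _ => hc _
  set a : Fin (n+1) := 0 with hadef
  have ha : a ∈ (Finset.univ : Finset (Fin (n+1))) := Finset.mem_univ a
  have h1 : w (n+1) = ∑ P : Finpartition (Finset.univ : Finset (Fin (n+1))),
      ∏ b ∈ P.parts, c b.card := by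
    have := key Finset.univ
    rwa [Finset.card_fin] at this
  rw [h1, ← Equiv.sum_comp (splitEquiv ha).symm
    (fun P : Finpartition (Finset.univ : Finset (Fin (n+1))) => ∏ b ∈ P.parts, c b.card),
    ← Finset.univ_sigma_univ, Finset.sum_sigma]
  have h2 : ∀ (T : {T : Finset (Fin (n+1)) // a ∈ T ∧ T ⊆ Finset.univ})
      (Q : Finpartition (Finset.univ \ (T : Finset (Fin (n+1))))),
      (∏ b ∈ ((splitEquiv ha).symm ⟨T, Q⟩).parts, c b.card)
        = c (T : Finset (Fin (n+1))).card * ∏ b ∈ Q.parts, c b.card := by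
    intro T Q
    have hparts : ((splitEquiv ha).symm ⟨T, Q⟩).parts
        = insert (T : Finset (Fin (n+1))) Q.parts := rfl
    rw [hparts, Finset.prod_insert (not_mem_parts_sdiff T.2.1 Q)]
  have h3 : ∀ T : {T : Finset (Fin (n+1)) // a ∈ T ∧ T ⊆ Finset.univ},
      (∑ Q : Finpartition (Finset.univ \ (T : Finset (Fin (n+1)))),
        ∏ b ∈ ((splitEquiv ha).symm ⟨T, Q⟩).parts, c b.card)
      = c (T : Finset (Fin (n+1))).card * w (n + 1 - (T : Finset (Fin (n+1))).card) := by
    intro T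
    have hcard : (Finset.univ \ (T : Finset (Fin (n+1)))).card
        = n + 1 - (T : Finset (Fin (n+1))).card := by
      rw [Finset.card_sdiff_of_subset (Finset.subset_univ _), Finset.card_fin]
    calc (∑ Q : Finpartition (Finset.univ \ (T : Finset (Fin (n+1)))),
        ∏ b ∈ ((splitEquiv ha).symm ⟨T, Q⟩).parts, c b.card)
        = ∑ Q : Finpartition (Finset.univ \ (T : Finset (Fin (n+1)))),
          c (T : Finset (Fin (n+1))).card * ∏ b ∈ Q.parts, c b.card :=
        Finset.sum_congr rfl fun Q _ => h2 T Q
      _ = c (T : Finset (Fin (n+1))).card * ∑ Q : Finpartition (Finset.univ \ (T : Finset (Fin (n+1)))),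
          ∏ b ∈ Q.parts, c b.card := by rw [Finset.mul_sum]
      _ = _ := by rw [← key, hcard]
  rw [Finset.sum_congr rfl (fun T _ => h3 T)]
  -- convert subtype sum to a Finset sum
  have h4 : (∑ T : {T : Finset (Fin (n+1)) // a ∈ T ∧ T ⊆ Finset.univ},
      c (T : Finset (Fin (n+1))).card * w (n + 1 - (T : Finset (Fin (n+1))).card))
      = ∑ T ∈ Finset.univ.filter (fun T : Finset (Fin (n+1)) => a ∈ T ∧ T ⊆ Finset.univ),
        c T.card * w (n + 1 - T.card) := by
    exact (Finset.sum_subtype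
      (Finset.univ.filter (fun T : Finset (Fin (n+1)) => a ∈ T ∧ T ⊆ Finset.univ))
      (by intro T; simp)
      (fun T : Finset (Fin (n+1)) => c T.card * w (n + 1 - T.card))).symm
  rw [h4]
  have h5 : (∑ T ∈ Finset.univ.filter (fun T : Finset (Fin (n+1)) => a ∈ T ∧ T ⊆ Finset.univ),
        c T.card * w (n + 1 - T.card))
      = ∑ T' ∈ ((Finset.univ : Finset (Fin (n+1))).erase a).powerset,
          c (T'.card + 1) * w (n - T'.card) := by
    refine Finset.sum_nbij' (fun T => T.erase a) (fun T' => insert a T') ?_ ?_ ?_ ?_ ?_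
    · intro T hT
      rw [Finset.mem_filter] at hT
      exact Finset.mem_powerset.mpr (Finset.erase_subset_erase a (Finset.subset_univ T))
    · intro T' hT'
      rw [Finset.mem_powerset] at hT'
      exact Finset.mem_filter.mpr ⟨Finset.mem_univ _,
        Finset.mem_insert_self a T', Finset.subset_univ _⟩
    · intro T hT
      rw [Finset.mem_filter] at hT
      exact Finset.insert_erase hT.2.1
    · intro T' hT'
      rw [Finset.mem_powerset] at hT'
      have : a ∉ T' := fun h => (Finset.mem_erase.mp (hT' h)).1 rfl
      exact Finset.erase_insert this
    · intro T hT
      rw [Finset.mem_filter] at hT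
      have h1 : a ∈ T := hT.2.1
      have hpos : 1 ≤ T.card := Finset.card_pos.mpr ⟨a, h1⟩
      simp only [Finset.card_erase_of_mem h1]
      have he : T.card - 1 + 1 = T.card := by omega
      rw [he]
      congr 2
      omega
  rw [h5, Finset.powerset_card_disjiUnion]
  erw [Finset.sum_disjiUnion]
  have hcarde : ((Finset.univ : Finset (Fin (n+1))).erase a).card = n := by
    rw [Finset.card_erase_of_mem ha, Finset.card_fin]
    omega
  rw [hcarde]

  refine Finset.sum_congr rfl fun j hj => ?_
  have h6 : ∀ T' ∈ Finset.powersetCard j ((Finset.univ : Finset (Fin (n+1))).erase a),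
      c (T'.card + 1) * w (n - T'.card) = c (j+1) * w (n-j) := by
    intro T' hT'
    rw [(Finset.mem_powersetCard.mp hT').2]
  rw [Finset.sum_congr rfl h6, Finset.sum_const, Finset.card_powersetCard, hcarde,
    smul_eq_mul]


section BaseCases

lemma card_osp_empty {γ : Type*} [DecidableEq γ] :
    Nat.card (OrderedSetPartition (∅ : Finset γ)) = 1 := by
  have hu : Unique (OrderedSetPartition (∅ : Finset γ)) :=
    { default := ⟨[], fun T hT => absurd hT (List.not_mem_nil (a := T)), List.Pairwise.nil, rfl⟩
      uniq := by
        rintro ⟨L, h1, h2, h3⟩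
        refine Subtype.ext ?_
        show L = []
        match L with
        | [] => rfl
        | A :: rest =>
          exfalso
          have hA : A ⊆ ∅ := by
            rw [← h3]; exact subset_foldr (A :: rest) (List.mem_cons_self (a := A) (l := rest))
          exact h1 A (List.mem_cons_self (a := A) (l := rest)) (Finset.subset_empty.mp hA)
    }
  exact Nat.card_unique

lemma orderedBell_zero : orderedBell 0 = 1 := by
  rw [orderedBell, show (Finset.univ : Finset (Fin 0)) = ∅ from Finset.univ_eq_empty]
  exact card_osp_empty

def finZeroPartition : Finpartition (Finset.univ : Finset (Fin 0)) where
  parts := ∅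
  supIndep := Finset.supIndep_empty _
  sup_parts := by simp [Finset.univ_eq_empty]
  bot_notMem := Finset.notMem_empty _

lemma parts_empty_fin_zero (P : Finpartition (Finset.univ : Finset (Fin 0))) :
    P.parts = ∅ :=
  Finpartition.parts_eq_empty_iff.mpr (by simp [Finset.univ_eq_empty])

lemma card_wrap_empty (St : Finset (Fin 0) → Type*) [∀ b, Finite (St b)] :
    Nat.card ((P : Finpartition (Finset.univ : Finset (Fin 0))) ×
      ((b : P.parts) → St (b : Finset (Fin 0)))) = 1 := by
  rw [nat_card_sigma_pi]
  have hone : ∀ P : Finpartition (Finset.univ : Finset (Fin 0)),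
      (∏ b ∈ P.parts.attach, Nat.card (St (b : Finset (Fin 0)))) = 1 := by
    intro P
    have := parts_empty_fin_zero P
    rw [Finset.prod_eq_one]
    intro b _
    exact absurd (Finset.eq_empty_iff_forall_notMem.mp this (b : Finset (Fin 0)) b.2) not_false
  rw [Finset.sum_congr rfl (fun P _ => hone P), Finset.sum_const, smul_eq_mul, mul_one,
    Finset.card_univ]
  refine Fintype.card_eq_one_iff.mpr ⟨finZeroPartition, fun P => ?_⟩
  exact Finpartition.ext (by rw [parts_empty_fin_zero P, parts_empty_fin_zero finZeroPartition])

lemma hier_zero : hier 0 = 1 := card_wrap_empty OrderedSetPartition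

lemma hierHier_zero : hierHier 0 = 1 := card_wrap_empty HierarchicalOrdering

end BaseCases

section Recurrences

lemma hier_rec (n : ℕ) :
    hier (n+1) = ∑ j ∈ Finset.range (n+1), n.choose j * (orderedBell (j+1) * hier (n-j)) :=
  wrap_rec n OrderedSetPartition orderedBell hier (fun b => card_osp b) (fun S => card_hier S)

lemma hierHier_rec (n : ℕ) :
    hierHier (n+1) = ∑ j ∈ Finset.range (n+1), n.choose j * (hier (j+1) * hierHier (n-j)) :=
  wrap_rec n HierarchicalOrdering hier hierHier (fun b => card_hier b) (fun S => card_wrapHier S)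

end Recurrences

section Fubini

variable {γ : Type*} [DecidableEq γ]

lemma mem_foldr_union (L : List (Finset γ)) (x : γ) :
    x ∈ L.foldr (· ∪ ·) ∅ ↔ ∃ B ∈ L, x ∈ B := by
  induction L with
  | nil => simp
  | cons A rest ih => simp [ih]

lemma nat_card_sigma {ι : Type*} [Fintype ι] (f : ι → Type*) [∀ i, Finite (f i)] :
    Nat.card ((i : ι) × f i) = ∑ i, Nat.card (f i) := by
  classical
  have : ∀ i, Fintype (f i) := fun i => Fintype.ofFinite _
  rw [Nat.card_eq_fintype_card, Fintype.card_sigma]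
  exact Finset.sum_congr rfl fun i _ => (Nat.card_eq_fintype_card).symm

def ospCons {S : Finset γ} (x : Σ T : {T : Finset γ // T ⊆ S ∧ T ≠ ∅},
    OrderedSetPartition (S \ (T : Finset γ))) : OrderedSetPartition S :=
  ⟨(x.1 : Finset γ) :: x.2.1, by
    obtain ⟨⟨T, hTS, hTne⟩, ⟨L, h1, h2, h3⟩⟩ := x
    refine ⟨?_, ?_, ?_⟩
    · intro B hB
      rcases List.mem_cons.mp hB with rfl | h
      · exact hTne
      · exact h1 B h
    · rw [List.pairwise_cons]
      refine ⟨fun B hB => ?_, h2⟩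
      have hBsub : B ⊆ S \ T := mem_osp_subset ⟨h1, h2, h3⟩ hB
      exact (Finset.sdiff_disjoint.symm.mono_right hBsub)
    · show T ∪ L.foldr (· ∪ ·) ∅ = S
      rw [h3, Finset.union_sdiff_of_subset hTS]⟩

lemma ospCons_bijective {S : Finset γ} (hS : S.Nonempty) :
    Function.Bijective (ospCons (S := S)) := by
  constructor
  · rintro ⟨⟨T, hTS, hTne⟩, ⟨L, hL⟩⟩ ⟨⟨T', hTS', hTne'⟩, ⟨L', hL'⟩⟩ h
    have h2 : T :: L = T' :: L' := congrArg Subtype.val h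
    obtain ⟨rfl, rfl⟩ : T = T' ∧ L = L' := by
      constructor
      · exact (List.cons.injEq _ _ _ _ ▸ h2).1
      · exact (List.cons.injEq _ _ _ _ ▸ h2).2
    rfl
  · rintro ⟨L, hL⟩
    match L, hL with
    | [], hL =>
      exfalso
      have : S = ∅ := hL.2.2.symm
      rw [this] at hS
      exact Finset.not_nonempty_empty hS
    | T :: rest, hL =>
      have hTS : T ⊆ S := mem_osp_subset hL (List.mem_cons_self (a := T) (l := rest))
      have hTne : T ≠ ∅ := hL.1 T (List.mem_cons_self (a := T) (l := rest))
      have hdis : ∀ B ∈ rest, Disjoint T B := (List.pairwise_cons.mp hL.2.1).1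
      have h1 : ∀ B ∈ rest, B ≠ ∅ := fun B hB => hL.1 B (List.mem_cons_of_mem _ hB)
      have h2 : rest.Pairwise Disjoint := (List.pairwise_cons.mp hL.2.1).2
      have h3 : rest.foldr (· ∪ ·) ∅ = S \ T := by
        ext y
        rw [Finset.mem_sdiff, mem_foldr_union]
        constructor
        · rintro ⟨B, hB, hyB⟩
          constructor
          · rw [← hL.2.2]
            show y ∈ T ∪ rest.foldr (· ∪ ·) ∅
            exact Finset.mem_union_right _ ((mem_foldr_union rest y).mpr ⟨B, hB, hyB⟩)
          · intro hyT
            exact (Finset.disjoint_left.mp (hdis B hB)) hyT hyB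
        · rintro ⟨hyS, hyT⟩
          have : y ∈ T ∪ rest.foldr (· ∪ ·) ∅ := by
            rw [show T ∪ rest.foldr (· ∪ ·) ∅ = (T :: rest).foldr (· ∪ ·) ∅ from rfl, hL.2.2]
            exact hyS
          rcases Finset.mem_union.mp this with h | h
          · exact absurd h hyT
          · exact (mem_foldr_union rest y).mp h
      exact ⟨⟨⟨T, hTS, hTne⟩, ⟨rest, h1, h2, h3⟩⟩, rfl⟩

lemma orderedBell_rec (n : ℕ) :
    orderedBell (n+1) = ∑ k ∈ Finset.range (n+1), (n+1).choose (k+1) * orderedBell (n-k) := by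
  classical
  have hS : (Finset.univ : Finset (Fin (n+1))).Nonempty := ⟨0, Finset.mem_univ 0⟩
  have hbij := ospCons_bijective hS
  have h1 : orderedBell (n+1)
      = Nat.card (Σ T : {T : Finset (Fin (n+1)) // T ⊆ Finset.univ ∧ T ≠ ∅},
          OrderedSetPartition (Finset.univ \ (T : Finset (Fin (n+1))))) := by
    rw [orderedBell]
    exact (Nat.card_congr (Equiv.ofBijective _ hbij)).symm
  rw [h1, nat_card_sigma]
  have h2 : ∀ T : {T : Finset (Fin (n+1)) // T ⊆ Finset.univ ∧ T ≠ ∅},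
      Nat.card (OrderedSetPartition (Finset.univ \ (T : Finset (Fin (n+1)))))
        = orderedBell (n + 1 - (T : Finset (Fin (n+1))).card) := by
    intro T
    rw [card_osp, Finset.card_sdiff_of_subset (Finset.subset_univ _), Finset.card_fin]
  rw [Finset.sum_congr rfl (fun T _ => h2 T)]
  have h4 : (∑ T : {T : Finset (Fin (n+1)) // T ⊆ Finset.univ ∧ T ≠ ∅},
      orderedBell (n + 1 - (T : Finset (Fin (n+1))).card))
      = ∑ T ∈ Finset.univ.filter (fun T : Finset (Fin (n+1)) => T ⊆ Finset.univ ∧ T ≠ ∅),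
        orderedBell (n + 1 - T.card) :=
    (Finset.sum_subtype
      (Finset.univ.filter (fun T : Finset (Fin (n+1)) => T ⊆ Finset.univ ∧ T ≠ ∅))
      (by intro T; simp)
      (fun T : Finset (Fin (n+1)) => orderedBell (n + 1 - T.card))).symm
  rw [h4, Finset.sum_filter]
  have h5 : (Finset.univ : Finset (Finset (Fin (n+1))))
      = (Finset.univ : Finset (Fin (n+1))).powerset := Finset.powerset_univ.symm
  rw [h5, Finset.powerset_card_disjiUnion]
  erw [Finset.sum_disjiUnion]
  rw [Finset.card_fin]
  rw [Finset.sum_range_succ']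
  have h6 : ∀ k, (∑ T ∈ Finset.powersetCard (k+1) (Finset.univ : Finset (Fin (n+1))),
      if T ⊆ Finset.univ ∧ T ≠ ∅ then orderedBell (n + 1 - T.card) else 0)
      = (n+1).choose (k+1) * orderedBell (n-k) := by
    intro k
    have h7 : ∀ T ∈ Finset.powersetCard (k+1) (Finset.univ : Finset (Fin (n+1))),
        (if T ⊆ Finset.univ ∧ T ≠ ∅ then orderedBell (n + 1 - T.card) else 0)
        = orderedBell (n-k) := by
      intro T hT
      obtain ⟨hsub, hcard⟩ := Finset.mem_powersetCard.mp hT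
      have hne : T ≠ ∅ := by
        intro h
        rw [h] at hcard
        simp at hcard
      rw [if_pos ⟨hsub, hne⟩, hcard]
      congr 1
      omega
    rw [Finset.sum_congr rfl h7, Finset.sum_const, Finset.card_powersetCard, Finset.card_fin,
      smul_eq_mul]
  have h8 : (∑ T ∈ Finset.powersetCard 0 (Finset.univ : Finset (Fin (n+1))),
      if T ⊆ Finset.univ ∧ T ≠ ∅ then orderedBell (n + 1 - T.card) else 0) = 0 := by
    rw [Finset.powersetCard_zero]
    simp
  rw [h8, add_zero]
  exact Finset.sum_congr rfl fun k _ => h6 k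

end Fubini




/-- eSum sum of the exponential series -/
noncomputable def eSum (D : PowerSeries ℚ) (N : ℕ) : PowerSeries ℚ :=
  ∑ k ∈ Finset.range N, ((k ! : ℚ))⁻¹ • D ^ k

lemma coeff_pow_eq_zero {D : PowerSeries ℚ} (hD : PowerSeries.constantCoeff (R := ℚ) D = 0)
    {n k : ℕ} (h : n < k) : PowerSeries.coeff (R := ℚ) n (D ^ k) = 0 := by
  have hdvd : (PowerSeries.X : ℚ⟦X⟧) ^ k ∣ D ^ k :=
    pow_dvd_pow_of_dvd (PowerSeries.X_dvd_iff.mpr hD) k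
  exact (PowerSeries.X_pow_dvd_iff.mp hdvd) n h

lemma coeff_eSum {D : PowerSeries ℚ} (hD : PowerSeries.constantCoeff (R := ℚ) D = 0)
    {n N : ℕ} (h : n < N) :
    PowerSeries.coeff (R := ℚ) n (eSum D N) = PowerSeries.coeff (R := ℚ) n (expComp D) := by
  rw [eSum, map_sum, expComp, PowerSeries.coeff_mk]
  rw [← Finset.sum_range_add_sum_Ico _ (Nat.succ_le_of_lt h)]
  have h2 : ∑ k ∈ Finset.Ico (n+1) N, PowerSeries.coeff (R := ℚ) n ((k ! : ℚ)⁻¹ • D ^ k) = 0 := by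
    refine Finset.sum_eq_zero fun k hk => ?_
    rw [map_smul, coeff_pow_eq_zero hD (Finset.mem_Ico.mp hk).1, smul_zero]
  rw [h2, add_zero]
  refine Finset.sum_congr rfl fun k _ => ?_
  rw [map_smul, smul_eq_mul, div_eq_inv_mul]

lemma coeff_expComp_eq {D : PowerSeries ℚ} (hD : PowerSeries.constantCoeff (R := ℚ) D = 0)
    {n N : ℕ} (h : n < N) :
    PowerSeries.coeff (R := ℚ) n (expComp D) = PowerSeries.coeff (R := ℚ) n (eSum D N) :=
  (coeff_eSum hD h).symm

lemma coeff_zero_expComp (D : PowerSeries ℚ) : PowerSeries.coeff (R := ℚ) 0 (expComp D) = 1 := by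
  rw [expComp, PowerSeries.coeff_mk]
  simp

lemma derivative_eSum (D : PowerSeries ℚ) (N : ℕ) :
    d⁄dX ℚ (eSum D (N + 1)) = eSum D N * d⁄dX ℚ D := by
  rw [eSum, map_sum]
  rw [Finset.sum_range_succ']
  have h0 : d⁄dX ℚ (((0:ℕ)! : ℚ)⁻¹ • D ^ 0) = 0 := by simp
  rw [h0, add_zero, eSum, Finset.sum_mul]
  refine Finset.sum_congr rfl fun k _ => ?_
  rw [Derivation.map_smul, Derivation.leibniz_pow]
  rw [← Nat.cast_smul_eq_nsmul ℚ (k+1), smul_eq_mul, smul_smul, smul_mul_assoc]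
  congr 1
  rw [Nat.factorial_succ]
  push_cast
  have hk : (k ! : ℚ) ≠ 0 := by exact_mod_cast (Nat.factorial_pos k).ne'
  field_simp

lemma derivative_expComp {D : PowerSeries ℚ} (hD : PowerSeries.constantCoeff (R := ℚ) D = 0) :
    d⁄dX ℚ (expComp D) = d⁄dX ℚ D * expComp D := by
  ext n
  have e1 : PowerSeries.coeff (R := ℚ) (n+1) (expComp D) = PowerSeries.coeff (R := ℚ) (n+1) (eSum D (n+2)) :=
    (coeff_eSum hD (by omega)).symm
  rw [PowerSeries.coeff_derivative, e1, ← PowerSeries.coeff_derivative,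
    show (n:ℕ)+2 = (n+1)+1 from rfl, derivative_eSum]
  rw [mul_comm (eSum D (n+1)) (d⁄dX ℚ D), PowerSeries.coeff_mul, PowerSeries.coeff_mul]
  refine Finset.sum_congr rfl fun p hp => ?_
  rw [Finset.HasAntidiagonal.mem_antidiagonal] at hp
  congr 1
  exact coeff_eSum hD (show p.2 < n + 1 by omega)

theorem expComp_unique {D F : PowerSeries ℚ} (hD : PowerSeries.constantCoeff (R := ℚ) D = 0)
    (h0 : PowerSeries.coeff (R := ℚ) 0 F = 1) (hode : d⁄dX ℚ F = d⁄dX ℚ D * F) : F = expComp D := by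
  ext n
  induction n using Nat.strong_induction_on with
  | _ n ih =>
    match n with
    | 0 => rw [h0, coeff_zero_expComp]
    | n + 1 =>
      have h1 : PowerSeries.coeff (R := ℚ) n (d⁄dX ℚ F) = PowerSeries.coeff (R := ℚ) n (d⁄dX ℚ (expComp D)) := by
        rw [hode, derivative_expComp hD, PowerSeries.coeff_mul, PowerSeries.coeff_mul]
        refine Finset.sum_congr rfl fun p hp => ?_
        rw [Finset.HasAntidiagonal.mem_antidiagonal] at hp
        rw [ih p.2 (by omega)]
      rw [PowerSeries.coeff_derivative, PowerSeries.coeff_derivative] at h1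
      have : ((n:ℚ) + 1) ≠ 0 := by positivity
      exact mul_right_cancel₀ this h1

theorem egf_eq_expComp (c w : ℕ → ℕ) (hw0 : w 0 = 1)
    (hrec : ∀ n, w (n+1) = ∑ j ∈ Finset.range (n+1), n.choose j * (c (j+1) * w (n-j))) :
    (PowerSeries.mk fun n => (w n : ℚ) / (n ! : ℚ)) =
      expComp (PowerSeries.mk fun n => if n = 0 then 0 else (c n : ℚ) / (n ! : ℚ)) := by
  set D : PowerSeries ℚ := PowerSeries.mk fun n => if n = 0 then 0 else (c n : ℚ) / (n ! : ℚ)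
    with hDdef
  have hD : PowerSeries.constantCoeff (R := ℚ) D = 0 := by
    rw [← PowerSeries.coeff_zero_eq_constantCoeff_apply, hDdef, PowerSeries.coeff_mk]; simp
  refine expComp_unique hD (by simp [hw0]) ?_
  ext n
  rw [PowerSeries.coeff_derivative, PowerSeries.coeff_mk, PowerSeries.coeff_mul,
    Finset.Nat.sum_antidiagonal_eq_sum_range_succ_mk, hrec n]
  push_cast
  rw [Finset.sum_div, Finset.sum_mul]
  refine Finset.sum_congr rfl fun j hj => ?_
  rw [Finset.mem_range] at hj
  have hjn : j ≤ n := by omega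
  simp only [hDdef, PowerSeries.coeff_derivative, PowerSeries.coeff_mk]
  have hne : ¬ (j + 1 = 0) := by omega
  rw [if_neg hne, Nat.cast_choose ℚ hjn]
  have h1 : (j ! : ℚ) ≠ 0 := by exact_mod_cast (Nat.factorial_pos j).ne'
  have h2 : ((n-j)! : ℚ) ≠ 0 := by exact_mod_cast (Nat.factorial_pos (n-j)).ne'
  have h3 : (n ! : ℚ) ≠ 0 := by exact_mod_cast (Nat.factorial_pos n).ne'
  rw [Nat.factorial_succ n, Nat.factorial_succ j]
  push_cast
  field_simp

theorem fubini_egf (a : ℕ → ℕ) (h0 : a 0 = 1)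
    (hrec : ∀ n, a (n+1) = ∑ k ∈ Finset.range (n+1), (n+1).choose (k+1) * a (n-k)) :
    (PowerSeries.mk fun n => (a n : ℚ) / (n ! : ℚ)) = (2 - PowerSeries.exp ℚ)⁻¹ := by
  have hconst : PowerSeries.constantCoeff (R := ℚ) (2 - PowerSeries.exp ℚ) ≠ 0 := by
    rw [map_sub, PowerSeries.constantCoeff_exp, map_ofNat]
    norm_num
  rw [PowerSeries.eq_inv_iff_mul_eq_one hconst]
  ext n
  rw [mul_sub, map_sub, mul_comm _ (2 : ℚ⟦X⟧), two_mul, map_add]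
  have hexp : ∀ j : ℕ, PowerSeries.coeff (R := ℚ) j (PowerSeries.exp ℚ) = 1 / (j ! : ℚ) := by
    intro j; rw [PowerSeries.coeff_exp]; simp
  match n with
  | 0 =>
    simp [h0, hexp]
  | (m+1) =>
    have hone : PowerSeries.coeff (R := ℚ) (m+1) (1 : ℚ⟦X⟧) = 0 := by
      rw [PowerSeries.coeff_one]; simp
    rw [hone, PowerSeries.coeff_mul, Finset.Nat.sum_antidiagonal_eq_sum_range_succ_mk,
      PowerSeries.coeff_mk]
    have hsplit : ∑ k ∈ Finset.range (m+1+1),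
        PowerSeries.coeff (R := ℚ) (k, m+1-k).1 (PowerSeries.mk fun n => (a n : ℚ) / (n ! : ℚ)) *
          PowerSeries.coeff (R := ℚ) (k, m+1-k).2 (PowerSeries.exp ℚ)
        = (∑ k ∈ Finset.range (m+1), (a k : ℚ) / (k ! : ℚ) * (1 / ((m+1-k)! : ℚ)))
          + (a (m+1) : ℚ) / ((m+1)! : ℚ) := by
      rw [Finset.sum_range_succ]
      simp only [PowerSeries.coeff_mk, hexp]
      norm_num
    rw [hsplit]
    have hrefl : ∑ k ∈ Finset.range (m+1), (a k : ℚ) / (k ! : ℚ) * (1 / ((m+1-k)! : ℚ))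
        = ∑ j ∈ Finset.range (m+1), (a (m-j) : ℚ) / ((m-j)! : ℚ) * (1 / ((j+1)! : ℚ)) := by
      rw [← Finset.sum_range_reflect]
      refine Finset.sum_congr rfl fun j hj => ?_
      rw [Finset.mem_range] at hj
      have e1 : m + 1 - 1 - j = m - j := by omega
      have e2 : m + 1 - (m - j) = j + 1 := by omega
      rw [e1, e2]
    have hsum : (a (m+1) : ℚ) / ((m+1)! : ℚ)
        = ∑ j ∈ Finset.range (m+1), (a (m-j) : ℚ) / ((m-j)! : ℚ) * (1 / ((j+1)! : ℚ)) := by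
      rw [hrec m]
      push_cast
      rw [Finset.sum_div]
      refine Finset.sum_congr rfl fun j hj => ?_
      rw [Finset.mem_range] at hj
      have hjm : j + 1 ≤ m + 1 := by omega
      rw [Nat.cast_choose ℚ hjm]
      have e3 : m + 1 - (j + 1) = m - j := by omega
      rw [e3]
      have h1 : ((j+1)! : ℚ) ≠ 0 := by exact_mod_cast (Nat.factorial_pos (j+1)).ne'
      have h2 : ((m-j)! : ℚ) ≠ 0 := by exact_mod_cast (Nat.factorial_pos (m-j)).ne'
      have h3 : ((m+1)! : ℚ) ≠ 0 := by exact_mod_cast (Nat.factorial_pos (m+1)).ne'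
      field_simp
    rw [hrefl, ← hsum]
    ring



end EgfAux

/-- **Hierarchies of hierarchical orderings.** The e.g.f. of `G_n` equals
`exp( exp( 1/(2 − eˣ) − 1 ) − 1 )`; equivalently, it equals `exp( ∑_{n≥1} (H_n/n!)xⁿ )`. -/
theorem egf_hierHier :
    (PowerSeries.mk fun n => (hierHier n : ℚ) / (n ! : ℚ)) =
        expComp (expComp ((2 - PowerSeries.exp ℚ)⁻¹ - 1) - 1) ∧
      (PowerSeries.mk fun n => (hierHier n : ℚ) / (n ! : ℚ)) =
        expComp (PowerSeries.mk fun n => if n = 0 then 0 else (hier n : ℚ) / (n ! : ℚ)) := by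
  classical
  have hA : (PowerSeries.mk fun n => (orderedBell n : ℚ) / (n ! : ℚ))
      = (2 - PowerSeries.exp ℚ)⁻¹ :=
    EgfAux.fubini_egf orderedBell EgfAux.orderedBell_zero EgfAux.orderedBell_rec
  have hAsub : (2 - PowerSeries.exp ℚ)⁻¹ - 1
      = (PowerSeries.mk fun n => if n = 0 then 0 else (orderedBell n : ℚ) / (n ! : ℚ)) := by
    rw [← hA]
    ext n
    rw [map_sub, PowerSeries.coeff_mk, PowerSeries.coeff_mk, PowerSeries.coeff_one]
    match n with
    | 0 => simp [EgfAux.orderedBell_zero]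
    | m+1 => simp
  have hH : (PowerSeries.mk fun n => (hier n : ℚ) / (n ! : ℚ))
      = expComp (PowerSeries.mk fun n => if n = 0 then 0 else (orderedBell n : ℚ) / (n ! : ℚ)) :=
    EgfAux.egf_eq_expComp orderedBell hier EgfAux.hier_zero EgfAux.hier_rec
  have hG : (PowerSeries.mk fun n => (hierHier n : ℚ) / (n ! : ℚ))
      = expComp (PowerSeries.mk fun n => if n = 0 then 0 else (hier n : ℚ) / (n ! : ℚ)) :=
    EgfAux.egf_eq_expComp hier hierHier EgfAux.hierHier_zero EgfAux.hierHier_rec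
  refine ⟨?_, hG⟩
  have harg : (PowerSeries.mk fun n => if n = 0 then 0 else (hier n : ℚ) / (n ! : ℚ))
      = expComp ((2 - PowerSeries.exp ℚ)⁻¹ - 1) - 1 := by
    rw [hAsub, ← hH]
    ext n
    rw [PowerSeries.coeff_mk, map_sub, PowerSeries.coeff_mk, PowerSeries.coeff_one]
    match n with
    | 0 => simp [EgfAux.hier_zero]
    | m+1 => simp
  rw [hG, harg]
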